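/- Let q be a prime power, n ≥ 1, F = 𝔽_{q^n}, m a positive integer with gcd(m,n) = 1, σ : x ↦ x^{q^m}, and let A be a 3×3 matrix over F of rank 2 whose left radical {x ∈ F³ : XᵀAY^σ = 0 for all y} and right radical {y ∈ F³ : XᵀAY^σ = 0 for all x} are distinct (1-dimensional) subspaces. Then the σ-conic Γ = {[x] ∈ PG(2,q^n) : XᵀAX^σ = 0} is projectively equivalent to exactly one of the following: (i) a degenerate C_F^m-set with equation x₂(a x₁x₂^{q^m−1} + c x₂^{q^m} + x₃^{q^m}) = 0 for some a, c ∈ F with a ≠ 0, or (ii) a C_F^m-set with equation (a x₁ + c x₂)x₂^{q^m} + x₁x₃^{q^m} = 0 for some a, c ∈ F with c ≠ 0; i.e., there is an invertible 3×3 matrix M over F mapping Γ onto one of these point sets. -/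

import Mathlib

open scoped LinearAlgebra.Projectivization

/-- The σ-sesquilinear form Xᵀ A Y^σ on F³ associated with a 3×3 matrix A and
σ : x ↦ x^(q^m). -/
def sForm {F : Type*} [Field F] (q m : ℕ) (A : Matrix (Fin 3) (Fin 3) F)
    (x y : Fin 3 → F) : F :=
  ∑ i : Fin 3, ∑ j : Fin 3, A i j * x i * (y j) ^ (q ^ m)

section Aux

variable {F : Type*} [Field F] {q m : ℕ} {A : Matrix (Fin 3) (Fin 3) F}

private lemma sForm_left_expand (s t u y : Fin 3 → F) (α β γ : F) :
    sForm q m A (α • s + β • t + γ • u) y =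
      α * sForm q m A s y + β * sForm q m A t y + γ * sForm q m A u y := by
  simp only [sForm, Fin.sum_univ_three, Pi.add_apply, Pi.smul_apply, smul_eq_mul]
  ring

private lemma sForm_smul_left (x y : Fin 3 → F) (cc : F) :
    sForm q m A (cc • x) y = cc * sForm q m A x y := by
  simp only [sForm, Fin.sum_univ_three, Pi.smul_apply, smul_eq_mul]
  ring

private lemma sForm_smul_right (x y : Fin 3 → F) (cc : F) :
    sForm q m A x (cc • y) = cc ^ (q ^ m) * sForm q m A x y := by
  simp only [sForm, Fin.sum_univ_three, Pi.smul_apply, smul_eq_mul, mul_pow]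
  ring

private lemma sForm_right_expand
    (hadd : ∀ x y : F, (x + y) ^ q ^ m = x ^ q ^ m + y ^ q ^ m)
    (x s t u : Fin 3 → F) (α β γ : F) :
    sForm q m A x (α • s + β • t + γ • u) =
      α ^ q ^ m * sForm q m A x s + β ^ q ^ m * sForm q m A x t +
        γ ^ q ^ m * sForm q m A x u := by
  simp only [sForm, Pi.add_apply, Pi.smul_apply, smul_eq_mul, hadd, mul_pow,
    Fin.sum_univ_three]
  ring

private lemma sForm_zero_left (u : Fin 3 → F)
    (hu : ∀ j, ∑ i, u i * A i j = 0) (y : Fin 3 → F) : sForm q m A u y = 0 := by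
  have h0 := hu 0; have h1 := hu 1; have h2 := hu 2
  simp only [Fin.sum_univ_three] at h0 h1 h2
  simp only [sForm, Fin.sum_univ_three]
  linear_combination (y 0 ^ q ^ m) * h0 + (y 1 ^ q ^ m) * h1 + (y 2 ^ q ^ m) * h2

private lemma sForm_zero_right (w : Fin 3 → F)
    (hw : ∀ i, ∑ j, A i j * w j = 0) (s : Fin 3 → F)
    (hs : ∀ j, s j ^ q ^ m = w j) (x : Fin 3 → F) : sForm q m A x s = 0 := by
  have h0 := hw 0; have h1 := hw 1; have h2 := hw 2
  simp only [Fin.sum_univ_three] at h0 h1 h2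
  simp only [sForm, Fin.sum_univ_three, hs]
  linear_combination (x 0) * h0 + (x 1) * h1 + (x 2) * h2

end Aux

/-- If A is a 3×3 matrix of rank 2 over F = 𝔽_{qⁿ} whose left and right
radicals are distinct, then the σ-conic Γ = {[x] : Xᵀ A X^σ = 0} is projectively
equivalent (via an invertible matrix M) to either a degenerate C_F^m-set with equation
x₂(a x₁x₂^(q^m−1) + c x₂^(q^m) + x₃^(q^m)) = 0 (a ≠ 0), or a C_F^m-set with equation
(a x₁ + c x₂)x₂^(q^m) + x₁x₃^(q^m) = 0 (c ≠ 0). -/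
theorem rank_two_distinct_radicals_sigma_conic
    (q n m : ℕ) (hq : IsPrimePow q) (hn : 1 ≤ n) (hm : 0 < m)
    (hmn : Nat.gcd m n = 1)
    (F : Type*) [Field F] [Fintype F] (hF : Fintype.card F = q ^ n)
    (A : Matrix (Fin 3) (Fin 3) F) (hA : A.rank = 2)
    (hrad : {x : Fin 3 → F | ∀ y : Fin 3 → F, sForm q m A x y = 0} ≠
      {y : Fin 3 → F | ∀ x : Fin 3 → F, sForm q m A x y = 0}) :
    ∃ M : Matrix (Fin 3) (Fin 3) F, M.det ≠ 0 ∧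
      ((∃ a c : F, a ≠ 0 ∧ ∀ v : Fin 3 → F,
          (sForm q m A v v = 0 ↔
            (M.mulVec v 1) * (a * M.mulVec v 0 * (M.mulVec v 1) ^ (q ^ m - 1) +
              c * (M.mulVec v 1) ^ (q ^ m) + (M.mulVec v 2) ^ (q ^ m)) = 0)) ∨
        (∃ a c : F, c ≠ 0 ∧ ∀ v : Fin 3 → F,
          (sForm q m A v v = 0 ↔
            (a * M.mulVec v 0 + c * M.mulVec v 1) * (M.mulVec v 1) ^ (q ^ m) +
              M.mulVec v 0 * (M.mulVec v 2) ^ (q ^ m) = 0))) := by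
  classical
  -- notation
  set Q := q ^ m with hQdef
  have hq2 : 2 ≤ q := hq.two_le
  have hqpos : 0 < q := by omega
  have hQpos : 0 < Q := pow_pos hqpos m
  -- characteristic
  obtain ⟨p, e, hpP, hepos, hpe⟩ := hq
  have hpnat : p.Prime := Nat.prime_iff.mpr hpP
  haveI : Fact p.Prime := ⟨hpnat⟩
  have hcardF : Fintype.card F = p ^ (e * n) := by rw [hF, ← hpe, ← pow_mul]
  have hpF : (p : F) = 0 := by
    have h0 : ((p : F)) ^ (e * n) = 0 := by
      rw [← Nat.cast_pow, ← hcardF]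
      exact_mod_cast FiniteField.cast_card_eq_zero F
    exact (pow_eq_zero_iff (by positivity)).mp h0
  haveI hcharP : CharP F p := by
    have hdvd : ringChar F ∣ p := (ringChar.spec F p).mp hpF
    have hrc : (ringChar F).Prime := CharP.char_is_prime F (ringChar F)
    have : ringChar F = p := ((Nat.prime_dvd_prime_iff_eq hrc hpnat).mp hdvd)
    exact this ▸ ringChar.charP F
  have hadd : ∀ x y : F, (x + y) ^ Q = x ^ Q + y ^ Q := by
    intro x y
    have : Q = p ^ (e * m) := by rw [hQdef, ← hpe, ← pow_mul]
    rw [this]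
    exact add_pow_char_pow x y p (e * m)
  -- n = k + 1
  obtain ⟨k, rfl⟩ : ∃ k, n = k + 1 := ⟨n - 1, by omega⟩
  -- Frobenius power facts
  set K := q ^ (m * k) with hKdef
  have hpow_card : ∀ x : F, x ^ (q ^ (m * (k + 1))) = x := by
    intro x
    have h1 : q ^ (m * (k + 1)) = (Fintype.card F) ^ m := by
      rw [hF, ← pow_mul, Nat.mul_comm (k + 1) m]
    rw [h1]
    exact FiniteField.pow_card_pow m x
  have hQK : ∀ x : F, (x ^ Q) ^ K = x := by
    intro x
    rw [← pow_mul, hQdef, hKdef, ← pow_add]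
    rw [show m + m * k = m * (k + 1) by ring]
    exact hpow_card x
  have hKQ : ∀ x : F, (x ^ K) ^ Q = x := by
    intro x
    rw [← pow_mul, hQdef, hKdef, ← pow_add]
    rw [show m * k + m = m * (k + 1) by ring]
    exact hpow_card x
  have hinj : ∀ x y : F, x ^ Q = y ^ Q → x = y := by
    intro x y hxy
    have := congrArg (fun z : F => z ^ K) hxy
    simpa only [hQK] using this
  -- kernel vectors
  have hdetA : A.det = 0 := by
    by_contra h
    have : A.rank = 3 := by
      have := Matrix.rank_of_isUnit A (Matrix.isUnit_iff_isUnit_det A |>.mpr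
        (isUnit_iff_ne_zero.mpr h))
      simpa using this
    omega
  obtain ⟨w, hw0, hw⟩ := Matrix.exists_mulVec_eq_zero_iff.mpr hdetA
  obtain ⟨u, hu0, hu⟩ := Matrix.exists_vecMul_eq_zero_iff.mpr hdetA
  -- entrywise kernel statements
  have hu' : ∀ j, ∑ i, u i * A i j = 0 := by
    intro j
    have := congrFun hu j
    simpa [Matrix.vecMul, dotProduct, Fin.sum_univ_three] using this
  have hw' : ∀ i, ∑ j, A i j * w j = 0 := by
    intro i
    have := congrFun hw i
    simpa [Matrix.mulVec, dotProduct, Fin.sum_univ_three] using this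
  -- kernels as spans
  have hfr3 : Module.finrank F (Fin 3 → F) = 3 := by simp
  have hkerA : LinearMap.ker A.mulVecLin = Submodule.span F {w} := by
    have hle : Submodule.span F {w} ≤ LinearMap.ker A.mulVecLin := by
      rw [Submodule.span_singleton_le_iff_mem]
      exact LinearMap.mem_ker.mpr (by rw [Matrix.mulVecLin_apply]; exact hw)
    refine (Submodule.eq_of_le_of_finrank_le hle ?_).symm
    have h2 := LinearMap.finrank_range_add_finrank_ker A.mulVecLin
    rw [hfr3] at h2
    have hAr : Module.finrank F (LinearMap.range A.mulVecLin) = 2 := hA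
    have : Module.finrank F (LinearMap.ker A.mulVecLin) = 1 := by omega
    rw [this, finrank_span_singleton hw0]
    -- done
  have hkerAT : LinearMap.ker (Matrix.transpose A).mulVecLin = Submodule.span F {u} := by
    have hle : Submodule.span F {u} ≤ LinearMap.ker (Matrix.transpose A).mulVecLin := by
      rw [Submodule.span_singleton_le_iff_mem]
      refine LinearMap.mem_ker.mpr ?_
      rw [Matrix.mulVecLin_apply, Matrix.mulVec_transpose]
      exact hu
    refine (Submodule.eq_of_le_of_finrank_le hle ?_).symm
    have h2 := LinearMap.finrank_range_add_finrank_ker (Matrix.transpose A).mulVecLin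
    rw [hfr3] at h2
    have hAr : Module.finrank F (LinearMap.range (Matrix.transpose A).mulVecLin) = 2 := by
      have := Matrix.rank_transpose A
      rw [hA] at this
      exact this
    have : Module.finrank F (LinearMap.ker (Matrix.transpose A).mulVecLin) = 1 := by omega
    rw [this, finrank_span_singleton hu0]
    -- done
  -- sigma-preimage of w
  set s : Fin 3 → F := fun j => w j ^ K with hsdef
  have hsw : ∀ j, s j ^ Q = w j := fun j => hKQ (w j)
  have hs0 : s ≠ 0 := by
    intro h
    apply hw0
    funext j
    have hj := congrFun h j
    simp only [hsdef, Pi.zero_apply] at hj ⊢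
    rw [← hKQ (w j), hj, zero_pow (by omega)]
  -- universal zero lemmas
  have hfu : ∀ y, sForm q m A u y = 0 := sForm_zero_left u hu'
  have hfs : ∀ x, sForm q m A x s = 0 := sForm_zero_right w hw' s hsw
  -- left radical set
  have hL : {x : Fin 3 → F | ∀ y, sForm q m A x y = 0} = {x | ∃ c : F, x = c • u} := by
    ext x
    constructor
    · intro hx
      have hxk : x ∈ LinearMap.ker (Matrix.transpose A).mulVecLin := by
        refine LinearMap.mem_ker.mpr ?_
        rw [Matrix.mulVecLin_apply, Matrix.mulVec_transpose]
        funext j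
        have h0 := hx ![1, 0, 0]
        have h1 := hx ![0, 1, 0]
        have h2 := hx ![0, 0, 1]
        simp only [sForm, Fin.sum_univ_three, Matrix.cons_val_zero, Matrix.cons_val_one,
          Matrix.head_cons, Matrix.cons_val_two, Matrix.tail_cons, one_pow,
          zero_pow (pow_pos hqpos m).ne', mul_zero, mul_one, add_zero, zero_add] at h0 h1 h2
        fin_cases j <;>
          simp only [Fin.zero_eta, Fin.mk_one, Fin.reduceFinMk, Matrix.vecMul,
            dotProduct, Fin.sum_univ_three, Pi.zero_apply] <;>
          [linear_combination h0; linear_combination h1; linear_combination h2]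
      rw [hkerAT, Submodule.mem_span_singleton] at hxk
      obtain ⟨c, hc⟩ := hxk
      exact ⟨c, hc.symm⟩
    · rintro ⟨c, rfl⟩ y
      rw [sForm_smul_left, hfu, mul_zero]
  -- right radical set
  have hR : {y : Fin 3 → F | ∀ x, sForm q m A x y = 0} = {y | ∃ c : F, y = c • s} := by
    ext y
    constructor
    · intro hy
      have hyk : (fun j => y j ^ Q) ∈ LinearMap.ker A.mulVecLin := by
        refine LinearMap.mem_ker.mpr ?_
        rw [Matrix.mulVecLin_apply]
        funext i
        have h0 := hy ![1, 0, 0]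
        have h1 := hy ![0, 1, 0]
        have h2 := hy ![0, 0, 1]
        simp only [sForm, Fin.sum_univ_three, Matrix.cons_val_zero, Matrix.cons_val_one,
          Matrix.head_cons, Matrix.cons_val_two, Matrix.tail_cons,
          mul_zero, mul_one, add_zero, zero_add, zero_mul] at h0 h1 h2
        fin_cases i <;>
          simp only [Fin.zero_eta, Fin.mk_one, Fin.reduceFinMk, Matrix.mulVec,
            dotProduct, Fin.sum_univ_three, Pi.zero_apply] <;>
          [linear_combination h0; linear_combination h1; linear_combination h2]
      rw [hkerA, Submodule.mem_span_singleton] at hyk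
      obtain ⟨c, hc⟩ := hyk
      refine ⟨c ^ K, ?_⟩
      funext j
      apply hinj
      have hcj := congrFun hc j
      simp only [Pi.smul_apply, smul_eq_mul] at hcj ⊢
      rw [mul_pow, hKQ c, hsw j, hcj]
    · rintro ⟨c, rfl⟩ x
      rw [sForm_smul_right, hfs, mul_zero]
  -- s is not a multiple of u
  have hne : ∀ c : F, s ≠ c • u := by
    intro c hc
    apply hrad
    rw [hL, hR]
    have hc0 : c ≠ 0 := by
      intro h
      apply hs0
      rw [hc, h, zero_smul]
    ext z
    constructor
    · rintro ⟨a, rfl⟩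
      exact ⟨a * c⁻¹, by rw [hc, smul_smul, mul_assoc, inv_mul_cancel₀ hc0, mul_one]⟩
    · rintro ⟨a, rfl⟩
      exact ⟨a * c, by rw [hc, smul_smul]⟩
  -- independence of s, u
  have hsu : ∀ α γ : F, α • s + γ • u = 0 → α = 0 ∧ γ = 0 := by
    intro α γ h
    by_cases hα : α = 0
    · subst hα
      rw [zero_smul, zero_add] at h
      exact ⟨rfl, by
        rcases smul_eq_zero.mp h with h' | h'
        · exact h'
        · exact absurd h' hu0⟩
    · exfalso
      apply hne (-(α⁻¹ * γ))
      funext j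
      have hj := congrFun h j
      simp only [Pi.add_apply, Pi.smul_apply, smul_eq_mul, Pi.zero_apply] at hj
      simp only [Pi.smul_apply, smul_eq_mul]
      have hαα : α⁻¹ * α = 1 := inv_mul_cancel₀ hα
      linear_combination α⁻¹ * hj - (s j) * hαα
  -- choose t completing the basis
  have hnotall : ¬ ∀ j : Fin 3, (fun j' => if j = j' then (1 : F) else 0) ∈
      Submodule.span F ({s, u} : Set (Fin 3 → F)) := by
    intro hall
    have htop : (⊤ : Submodule F (Fin 3 → F)) ≤ Submodule.span F ({s, u} : Set (Fin 3 → F)) := by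
      intro z _
      rw [pi_eq_sum_univ z]
      exact Submodule.sum_mem _ fun i _ => Submodule.smul_mem _ _ (hall i)
    have h3 : Module.finrank F (Fin 3 → F) ≤
        Module.finrank F (Submodule.span F ({s, u} : Set (Fin 3 → F))) := by
      calc Module.finrank F (Fin 3 → F)
          = Module.finrank F (⊤ : Submodule F (Fin 3 → F)) := (finrank_top F _).symm
        _ ≤ _ := Submodule.finrank_mono htop
    have h2 : Module.finrank F (Submodule.span F ({s, u} : Set (Fin 3 → F))) ≤ 2 := by
      refine le_trans (finrank_span_le_card _) ?_
      rw [Set.toFinset_insert, Set.toFinset_singleton]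
      exact (Finset.card_insert_le _ _).trans (by simp)
    rw [hfr3] at h3
    omega
  push_neg at hnotall
  obtain ⟨jt, hjt⟩ := hnotall
  set t : Fin 3 → F := fun j' => if jt = j' then (1 : F) else 0 with htdef
  -- full independence
  have hstu : ∀ α β γ : F, α • s + β • t + γ • u = 0 → α = 0 ∧ β = 0 ∧ γ = 0 := by
    intro α β γ h
    by_cases hβ : β = 0
    · subst hβ
      rw [zero_smul, add_zero] at h
      obtain ⟨h1, h2⟩ := hsu α γ h
      exact ⟨h1, rfl, h2⟩
    · exfalso
      apply hjt
      refine Submodule.mem_span_pair.mpr ⟨-(β⁻¹ * α), -(β⁻¹ * γ), ?_⟩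
      funext j
      have hj := congrFun h j
      simp only [Pi.add_apply, Pi.smul_apply, smul_eq_mul, Pi.zero_apply] at hj ⊢
      have hββ : β⁻¹ * β = 1 := inv_mul_cancel₀ hβ
      linear_combination (-β⁻¹) * hj + (t j) * hββ
  -- the matrix N with columns s, t, u and its inverse M
  set N : Matrix (Fin 3) (Fin 3) F := Matrix.of fun i k => ![s, t, u] k i with hNdef
  have hNmul : ∀ x : Fin 3 → F, N.mulVec x = x 0 • s + x 1 • t + x 2 • u := by
    intro x
    funext i
    simp only [hNdef, Matrix.mulVec, dotProduct, Fin.sum_univ_three, Matrix.of_apply,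
      Matrix.cons_val_zero, Matrix.cons_val_one, Matrix.head_cons, Matrix.cons_val_two,
      Matrix.tail_cons, Pi.add_apply, Pi.smul_apply, smul_eq_mul]
    ring
  have hdetN : N.det ≠ 0 := by
    intro h
    obtain ⟨x, hx0, hx⟩ := Matrix.exists_mulVec_eq_zero_iff.mpr h
    rw [hNmul] at hx
    obtain ⟨h1, h2, h3⟩ := hstu _ _ _ hx
    apply hx0
    funext j
    fin_cases j <;> assumption
  set M : Matrix (Fin 3) (Fin 3) F := N⁻¹ with hMdef
  have hNM : N * M = 1 := Matrix.mul_nonsing_inv N (isUnit_iff_ne_zero.mpr hdetN)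
  have hdetM : M.det ≠ 0 := by
    intro h
    have := congrArg Matrix.det hNM
    rw [Matrix.det_mul, h, mul_zero, Matrix.det_one] at this
    exact zero_ne_one this
  have hrecon : ∀ v : Fin 3 → F,
      (M.mulVec v 0) • s + (M.mulVec v 1) • t + (M.mulVec v 2) • u = v := by
    intro v
    rw [← hNmul]
    rw [Matrix.mulVec_mulVec, hNM, Matrix.one_mulVec]
  -- the four coefficients
  set a := sForm q m A s t with hadef
  set b := sForm q m A s u with hbdef
  set c := sForm q m A t t with hcdef
  set d := sForm q m A t u with hddef
  -- expansion of the form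
  have hexp : ∀ v : Fin 3 → F, sForm q m A v v =
      a * (M.mulVec v 0 * (M.mulVec v 1) ^ Q) + b * (M.mulVec v 0 * (M.mulVec v 2) ^ Q) +
      c * (M.mulVec v 1 * (M.mulVec v 1) ^ Q) + d * (M.mulVec v 1 * (M.mulVec v 2) ^ Q) := by
    intro v
    conv_lhs => rw [← hrecon v]
    rw [sForm_left_expand, sForm_right_expand hadd, sForm_right_expand hadd,
      sForm_right_expand hadd, hfs s, hfs t, hfs u, hfu t, hfu u]
    rw [← hadef, ← hbdef, ← hcdef, ← hddef]
    ring
  -- in-second-argument expansion on basis vectors (used for the determinant argument)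
  have hsecond : ∀ x y : Fin 3 → F, sForm q m A x y =
      (M.mulVec y 0) ^ Q * sForm q m A x s + (M.mulVec y 1) ^ Q * sForm q m A x t +
        (M.mulVec y 2) ^ Q * sForm q m A x u := by
    intro x y
    conv_lhs => rw [← hrecon y]
    rw [sForm_right_expand hadd]
  -- nonsingularity of the 2x2 block
  have hdet2 : a * d - b * c ≠ 0 := by
    intro h
    -- first vector in the left radical
    have hmem1 : ∀ y, sForm q m A (c • s + (-a) • t) y = 0 := by
      intro y
      rw [show c • s + (-a) • t = c • s + (-a) • t + (0 : F) • u by rw [zero_smul, add_zero]]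
      rw [sForm_left_expand, hsecond s y, hsecond t y, hfs, hfu, hfs]
      rw [← hadef, ← hbdef, ← hcdef, ← hddef]
      ring_nf
      linear_combination (M.mulVec y 2) ^ Q * (-1 : F) * h
    have hmem2 : ∀ y, sForm q m A (d • s + (-b) • t) y = 0 := by
      intro y
      rw [show d • s + (-b) • t = d • s + (-b) • t + (0 : F) • u by rw [zero_smul, add_zero]]
      rw [sForm_left_expand, hsecond s y, hsecond t y, hfs, hfu, hfs]
      rw [← hadef, ← hbdef, ← hcdef, ← hddef]
      ring_nf
      linear_combination (M.mulVec y 1) ^ Q * h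
    have h1 : (c • s + (-a) • t) ∈ {x : Fin 3 → F | ∀ y, sForm q m A x y = 0} := hmem1
    have h2 : (d • s + (-b) • t) ∈ {x : Fin 3 → F | ∀ y, sForm q m A x y = 0} := hmem2
    rw [hL] at h1 h2
    obtain ⟨c1, hc1⟩ := h1
    obtain ⟨c2, hc2⟩ := h2
    have e1 : c • s + (-a) • t + (-c1) • u = 0 := by
      rw [hc1]; funext j
      simp only [Pi.add_apply, Pi.smul_apply, smul_eq_mul, Pi.zero_apply]; ring
    have e2 : d • s + (-b) • t + (-c2) • u = 0 := by
      rw [hc2]; funext j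
      simp only [Pi.add_apply, Pi.smul_apply, smul_eq_mul, Pi.zero_apply]; ring
    obtain ⟨hc0, ha0, -⟩ := hstu _ _ _ e1
    obtain ⟨hd0, hb0, -⟩ := hstu _ _ _ e2
    have ha0' : a = 0 := neg_eq_zero.mp ha0
    have hb0' : b = 0 := neg_eq_zero.mp hb0
    -- now s is in the left radical
    have hsL : s ∈ {x : Fin 3 → F | ∀ y, sForm q m A x y = 0} := by
      intro y
      rw [hsecond s y, hfs, ← hadef, ← hbdef, ha0', hb0']
      ring
    rw [hL] at hsL
    obtain ⟨cs, hcs⟩ := hsL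
    exact hne cs hcs
  -- case split on b
  by_cases hb : b = 0
  · -- degenerate case
    have had : a * d ≠ 0 := by
      intro h; apply hdet2; rw [hb]; ring_nf; rw [h] -- a*d - 0 = 0
    have ha0 : a ≠ 0 := fun h => had (by rw [h, zero_mul])
    have hd0 : d ≠ 0 := fun h => had (by rw [h, mul_zero])
    refine ⟨M, hdetM, Or.inl ⟨a * d⁻¹, c * d⁻¹, mul_ne_zero ha0 (inv_ne_zero hd0), ?_⟩⟩
    intro v
    have hx1 : M.mulVec v 1 * (M.mulVec v 1) ^ (Q - 1) = (M.mulVec v 1) ^ Q := by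
      rw [← pow_succ']
      congr 1
      omega
    have heq : (M.mulVec v 1) * (a * d⁻¹ * M.mulVec v 0 * (M.mulVec v 1) ^ (Q - 1) +
        c * d⁻¹ * (M.mulVec v 1) ^ Q + (M.mulVec v 2) ^ Q) =
        d⁻¹ * sForm q m A v v := by
      rw [hexp v, hb]
      have hdd : d * d⁻¹ = 1 := mul_inv_cancel₀ hd0
      linear_combination (a * d⁻¹ * M.mulVec v 0) * hx1 -
        (M.mulVec v 1 * (M.mulVec v 2) ^ Q) * hdd
    rw [heq]
    constructor
    · intro h; rw [h, mul_zero]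
    · intro h
      rcases mul_eq_zero.mp h with h' | h'
      · exact absurd h' (inv_ne_zero hd0)
      · exact h'
  · -- nondegenerate case
    set P : Matrix (Fin 3) (Fin 3) F := !![1, d * b⁻¹, 0; 0, 1, 0; 0, 0, 1] with hPdef
    have hdetP : P.det = 1 := by
      simp [hPdef, Matrix.det_fin_three]
    refine ⟨P * M, ?_, Or.inr ⟨a * b⁻¹, (c * b - a * d) * (b⁻¹ * b⁻¹), ?_, ?_⟩⟩
    · rw [Matrix.det_mul, hdetP, one_mul]; exact hdetM
    · refine mul_ne_zero ?_ (mul_ne_zero (inv_ne_zero hb) (inv_ne_zero hb))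
      intro h
      apply hdet2
      linear_combination -h
    · intro v
      have hy0 : (P * M).mulVec v 0 = M.mulVec v 0 + d * b⁻¹ * M.mulVec v 1 := by
        rw [← Matrix.mulVec_mulVec]
        simp [hPdef, Matrix.mulVec, dotProduct, Fin.sum_univ_three]
      have hy1 : (P * M).mulVec v 1 = M.mulVec v 1 := by
        rw [← Matrix.mulVec_mulVec]
        simp [hPdef, Matrix.mulVec, dotProduct, Fin.sum_univ_three]
      have hy2 : (P * M).mulVec v 2 = M.mulVec v 2 := by
        rw [← Matrix.mulVec_mulVec]
        simp [hPdef, Matrix.mulVec, dotProduct, Fin.sum_univ_three]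
      have heq : (a * b⁻¹ * ((P * M).mulVec v 0) +
          (c * b - a * d) * (b⁻¹ * b⁻¹) * ((P * M).mulVec v 1)) * ((P * M).mulVec v 1) ^ Q +
          ((P * M).mulVec v 0) * ((P * M).mulVec v 2) ^ Q = b⁻¹ * sForm q m A v v := by
        rw [hy0, hy1, hy2, hexp v]
        have hbb : b * b⁻¹ = 1 := mul_inv_cancel₀ hb
        field_simp
        ring
      rw [heq]
      constructor
      · intro h; rw [h, mul_zero]
      · intro h
        rcases mul_eq_zero.mp h with h' | h'
        · exact absurd h' (inv_ne_zero hb)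
        · exact h'
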